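/- Let S ∈ ℝ^{d×d} be symmetric positive semidefinite, let R ∈ ℝ^{d×d} be symmetric positive semidefinite with R² = S, and let W be the Moore–Penrose pseudoinverse of R. Let Σ ∈ ℝ^{d×k} be a matrix each of whose columns lies in Im(S), and let N be the Moore–Penrose pseudoinverse of W·Σ. Then (I_d − R·(W·Σ)·N·W)·Σ = 0. (This is the constraint-satisfaction identity showing the LEACE erasure matrix Â = I − W⁺(WΣ_XZ)(WΣ_XZ)⁺W satisfies Â·Σ_XZ = 0.) -/
import Mathlib


open Matrix

/-- Constraint satisfaction for LEACE:
`(I − R·(W·Sig)·N·W)·Sig = 0`, where `R` is the symmetric PSD square root of the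
symmetric PSD matrix `S`, `W = R⁺`, every column of `Sig` lies in `Im(S)`, and
`N = (W·Sig)⁺`. -/
theorem leace_constraint {d k : ℕ}
    (S R W : Matrix (Fin d) (Fin d) ℝ)
    (Sig : Matrix (Fin d) (Fin k) ℝ) (N : Matrix (Fin k) (Fin d) ℝ)
    (hS : S.PosSemidef) (hR : R.PosSemidef) (hRS : R * R = S)
    (hW1 : R * W * R = R) (hW2 : W * R * W = W)
    (hW3 : (R * W)ᵀ = R * W) (hW4 : (W * R)ᵀ = W * R)
    (hIm : ∀ j, ∃ x : Fin d → ℝ, S.mulVec x = fun i => Sig i j)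
    (hN1 : (W * Sig) * N * (W * Sig) = W * Sig) (hN2 : N * (W * Sig) * N = N)
    (hN3 : ((W * Sig) * N)ᵀ = (W * Sig) * N) (hN4 : (N * (W * Sig))ᵀ = N * (W * Sig)) :
    ((1 : Matrix (Fin d) (Fin d) ℝ) - R * (W * Sig) * N * W) * Sig = 0 := by
  have hRWS : R * W * S = S := by
    calc R * W * S = (R * W * R) * R := by rw [← hRS]; noncomm_ring
    _ = R * R := by rw [hW1]
    _ = S := hRS
  have key : R * W * Sig = Sig := by
    ext i j
    obtain ⟨x, hx⟩ := hIm j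
    have h1 : (fun l => Sig l j) = S.mulVec x := hx.symm
    have h2 : (R * W * Sig) i j = ((R * W).mulVec (fun l => Sig l j)) i := by
      simp [Matrix.mul_apply, Matrix.mulVec, dotProduct, Matrix.mul_assoc]
    rw [h2, h1, Matrix.mulVec_mulVec, hRWS, hx]
  have hfin : R * (W * Sig) * N * W * Sig = Sig := by
    calc R * (W * Sig) * N * W * Sig
        = R * ((W * Sig) * N * (W * Sig)) := by simp only [Matrix.mul_assoc]
    _ = R * (W * Sig) := by rw [hN1]
    _ = R * W * Sig := by rw [Matrix.mul_assoc]
    _ = Sig := key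
  calc ((1 : Matrix (Fin d) (Fin d) ℝ) - R * (W * Sig) * N * W) * Sig
      = Sig - R * (W * Sig) * N * W * Sig := by rw [Matrix.sub_mul, Matrix.one_mul]
  _ = 0 := by rw [hfin, sub_self]
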